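/- Let 0 < β < 1/(2k²) and let H be a k-partite k-graph with classes of size n and minimum legal co-degree δ_{k-1}(H) > (1-β)n/k. If H contains no independent set W with |W ∩ V_i| ≥ (1-k²β)(k-1)n/k for all i ∈ [k], then ν(H) ≥ n - k². -/

import Mathlib

set_option maxHeartbeats 4000000

/-- If 0 < β < 1/(2k²), H is a k-partite k-graph with classes of size n,
δ_{k-1}(H) > (1-β)n/k, and H has no independent set W with
|W ∩ V_i| ≥ (1-k²β)(k-1)n/k for all i, then ν(H) ≥ n - k². -/
theorem stmt4 {α : Type*} [Fintype α] [DecidableEq α]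
    (k n : ℕ) (hk : 1 ≤ k) (β : ℝ) (hβ0 : 0 < β) (hβ1 : β < 1 / (2 * (k : ℝ)^2))
    (P : Fin k → Finset α)
    (hP : ∀ v : α, ∃! i, v ∈ P i)
    (hPcard : ∀ i, (P i).card = n)
    (E : Finset (Finset α))
    (hE : ∀ e ∈ E, ∀ i, (e ∩ P i).card = 1)
    (hdeg : ∀ S : Finset α, S.card = k - 1 → (∀ i, (S ∩ P i).card ≤ 1) →
      (1 - β) * n / k < ((Finset.univ.filter (fun v => insert v S ∈ E)).card : ℝ))
    (hnotext : ¬ ∃ W : Finset α, (∀ e ∈ E, ¬ e ⊆ W) ∧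
      ∀ i, (1 - (k : ℝ)^2 * β) * ((k : ℝ) - 1) * n / k ≤ ((W ∩ P i).card : ℝ)) :
    ∃ M ⊆ E, (∀ e ∈ M, ∀ f ∈ M, e ≠ f → Disjoint e f) ∧ n - k^2 ≤ M.card := by
  classical
  obtain hk1 | hk2 := eq_or_lt_of_le hk
  · -- k = 1 : the empty set is an independent set meeting the (trivial) bound
    exfalso
    apply hnotext
    refine ⟨∅, ?_, ?_⟩
    · intro e he hsub
      have h1 := hE e he ⟨0, by omega⟩
      rw [Finset.subset_empty] at hsub
      subst hsub
      simp at h1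
    · intro i
      have hk1' : (k : ℝ) = 1 := by rw [← hk1]; norm_num
      rw [hk1']
      norm_num
  · -- main case : 2 ≤ k
    -- the class-membership facts
    have hclass : ∀ {x : α} {i j : Fin k}, x ∈ P i → x ∈ P j → i = j := by
      intro x i j hi hj
      obtain ⟨w, _, hu⟩ := hP x
      rw [hu i hi, hu j hj]
    have hcover : ∀ x : α, ∃ i, x ∈ P i := fun x => ⟨(hP x).choose, (hP x).choose_spec.1⟩
    -- the collection of matchings, and a maximum one
    set 𝓕 : Finset (Finset (Finset α)) :=
      E.powerset.filter (fun M => ∀ e ∈ M, ∀ f ∈ M, e ≠ f → Disjoint e f) with h𝓕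
    have hemp : (∅ : Finset (Finset α)) ∈ 𝓕 := by
      simp [h𝓕]
    obtain ⟨M, hM𝓕, hmax0⟩ := Finset.exists_max_image 𝓕 (fun M => M.card) ⟨∅, hemp⟩
    have hME : M ⊆ E := Finset.mem_powerset.1 (Finset.mem_filter.1 hM𝓕).1
    have hMpd : ∀ e ∈ M, ∀ f ∈ M, e ≠ f → Disjoint e f := (Finset.mem_filter.1 hM𝓕).2
    by_cases hdone : n - k^2 ≤ M.card
    · exact ⟨M, hME, hMpd, hdone⟩
    exfalso
    have hkn : M.card + k*k + 1 ≤ n := by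
      have : k^2 = k*k := sq k
      omega
    -- the exchange lemma: swapping `rem ⊆ M` for a strictly larger disjoint family
    -- of edges (each disjoint from M \ rem) contradicts maximality
    have exch : ∀ rem ⊆ M, ∀ F : Finset (Finset α), (∀ g ∈ F, g ∈ E) →
        (∀ g ∈ F, g.Nonempty) → (∀ g ∈ F, ∀ g' ∈ F, g ≠ g' → Disjoint g g') →
        (∀ g ∈ F, ∀ e ∈ M, e ∉ rem → Disjoint g e) → rem.card < F.card → False := by
      intro rem hrem F hFE hFne hFpd hFM hcard
      have hdisjMF : Disjoint (M \ rem) F := by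
        rw [Finset.disjoint_left]
        intro g hg hgF
        have := hFM g hgF g (Finset.mem_sdiff.1 hg).1 (Finset.mem_sdiff.1 hg).2
        have : g = ∅ := disjoint_self.1 this
        exact Finset.not_nonempty_empty (this ▸ hFne g hgF)
      have hM' : (M \ rem) ∪ F ∈ 𝓕 := by
        rw [h𝓕, Finset.mem_filter, Finset.mem_powerset]
        constructor
        · intro g hg
          rcases Finset.mem_union.1 hg with h | h
          · exact hME (Finset.mem_sdiff.1 h).1
          · exact hFE g h
        · intro e he f hf hne
          rcases Finset.mem_union.1 he with he' | he' <;>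
            rcases Finset.mem_union.1 hf with hf' | hf'
          · exact hMpd e (Finset.mem_sdiff.1 he').1 f (Finset.mem_sdiff.1 hf').1 hne
          · exact (hFM f hf' e (Finset.mem_sdiff.1 he').1 (Finset.mem_sdiff.1 he').2).symm
          · exact hFM e he' f (Finset.mem_sdiff.1 hf').1 (Finset.mem_sdiff.1 hf').2
          · exact hFpd e he' f hf' hne
      have hcard' : ((M \ rem) ∪ F).card = M.card - rem.card + F.card := by
        rw [Finset.card_union_of_disjoint hdisjMF, Finset.card_sdiff_of_subset hrem]
      have hle := hmax0 _ hM'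
      simp only [hcard'] at hle
      have hremM : rem.card ≤ M.card := Finset.card_le_card hrem
      omega
    -- uncovered vertices
    set V : Finset α := M.biUnion id with hV
    have hVmem : ∀ {x : α}, x ∈ V ↔ ∃ e ∈ M, x ∈ e := by
      intro x; simp [hV]
    set U : Fin k → Finset α := fun i => P i \ V with hU
    have hUcard : ∀ i, (U i).card = n - M.card := by
      intro i
      have h1 : P i ∩ V = M.biUnion (fun e => P i ∩ e) := by
        ext x
        simp only [Finset.mem_inter, hVmem, Finset.mem_biUnion]
        tauto
      have h2 : (P i ∩ V).card = M.card := by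
        rw [h1, Finset.card_biUnion]
        · have : ∀ e ∈ M, (P i ∩ e).card = 1 := by
            intro e he
            rw [Finset.inter_comm]
            exact hE e (hME he) i
          rw [Finset.sum_congr rfl this]
          simp
        · intro e he f hf hne
          exact Finset.disjoint_of_subset_left Finset.inter_subset_right
            (Finset.disjoint_of_subset_right Finset.inter_subset_right (hMpd e he f hf hne))
      have h3 : U i = P i \ (P i ∩ V) := by rw [Finset.sdiff_inter_self_left]
      rw [h3, Finset.card_sdiff_of_subset Finset.inter_subset_left, h2, hPcard]
    have hUP : ∀ i, U i ⊆ P i := fun i => Finset.sdiff_subset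
    have hUV : ∀ i, ∀ x ∈ U i, x ∉ V := fun i x hx => (Finset.mem_sdiff.1 hx).2
    -- a system of pairwise disjoint legal (k-1)-tuples of uncovered vertices
    have hUbig : ∀ i, (k-1)*(k+1) ≤ (U i).card := by
      intro i
      rw [hUcard i]
      have h1 : (k-1)*(k+1) + 1 = k*k := by zify [hk]; ring
      omega
    have hgi : ∀ i : Fin k, ∃ g : ({j : Fin k // j ≠ i} × Fin (k+1)) → α,
        Function.Injective g ∧ ∀ q, g q ∈ U i := by
      intro i
      have hcard : Fintype.card ({j : Fin k // j ≠ i} × Fin (k+1))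
          ≤ Fintype.card {x // x ∈ U i} := by
        rw [Fintype.card_coe, Fintype.card_prod, Fintype.card_fin]
        have h2 : Fintype.card {j : Fin k // j ≠ i} = k - 1 := by simp
        rw [h2]
        exact hUbig i
      obtain ⟨emb⟩ := Function.Embedding.nonempty_of_card_le hcard
      exact ⟨fun q => (emb q : α), Subtype.coe_injective.comp emb.injective, fun q => (emb q).2⟩
    choose g hginj hgmem using hgi
    set S : Fin k → Fin (k+1) → Finset α := fun j r =>
      Finset.univ.image (fun p : {i : Fin k // i ≠ j} => g p.1 ⟨⟨j, Ne.symm p.2⟩, r⟩) with hSdef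
    have hSmem : ∀ {j r x}, x ∈ S j r ↔
        ∃ p : {i : Fin k // i ≠ j}, g p.1 ⟨⟨j, Ne.symm p.2⟩, r⟩ = x := by
      intro j r x; simp [hSdef]
    have hSU : ∀ j r x, x ∈ S j r → ∃ i, i ≠ j ∧ x ∈ U i := by
      intro j r x hx
      obtain ⟨p, hp⟩ := hSmem.1 hx
      exact ⟨p.1, p.2, hp ▸ hgmem p.1 _⟩
    have hSuncov : ∀ j r x, x ∈ S j r → x ∉ V := by
      intro j r x hx
      obtain ⟨i, _, hxi⟩ := hSU j r x hx
      exact hUV i x hxi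
    have hSPj : ∀ j r, S j r ∩ P j = ∅ := by
      intro j r
      rw [Finset.eq_empty_iff_forall_notMem]
      intro x hx
      obtain ⟨i, hij, hxi⟩ := hSU j r x (Finset.mem_inter.1 hx).1
      exact hij (hclass (hUP i hxi) (Finset.mem_inter.1 hx).2)
    have hScard : ∀ j r, (S j r).card = k - 1 := by
      intro j r
      rw [hSdef]
      rw [Finset.card_image_of_injective _ ?_, Finset.card_univ]
      · simp
      · intro p p' hpp
        simp only at hpp
        have e1 : g p.1 ⟨⟨j, Ne.symm p.2⟩, r⟩ ∈ P p.1 := hUP _ (hgmem p.1 _)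
        have e2 : g p'.1 ⟨⟨j, Ne.symm p'.2⟩, r⟩ ∈ P p'.1 := hUP _ (hgmem p'.1 _)
        rw [hpp] at e1
        exact Subtype.ext (hclass e1 e2)
    have hSlegal : ∀ j r i, (S j r ∩ P i).card ≤ 1 := by
      intro j r i
      by_cases hij : i = j
      · subst hij; rw [hSPj]; simp
      · have h1 : S j r ∩ P i ⊆ {g i ⟨⟨j, Ne.symm hij⟩, r⟩} := by
          intro x hx
          obtain ⟨p, hp⟩ := hSmem.1 (Finset.mem_inter.1 hx).1
          have h2 : p.1 = i := hclass (hp ▸ hUP _ (hgmem p.1 _)) (Finset.mem_inter.1 hx).2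
          rw [Finset.mem_singleton, ← hp]
          subst h2
          rfl
        exact le_trans (Finset.card_le_card h1) (by simp)
    have hSdisj : ∀ {j r j' r'}, ¬(j = j' ∧ r = r') → Disjoint (S j r) (S j' r') := by
      intro j r j' r' hne
      rw [Finset.disjoint_left]
      intro x hx hx'
      obtain ⟨⟨i, hij⟩, hp⟩ := hSmem.1 hx
      obtain ⟨⟨i', hij'⟩, hp'⟩ := hSmem.1 hx'
      have e1 : g i ⟨⟨j, Ne.symm hij⟩, r⟩ ∈ P i := hUP _ (hgmem i _)
      have e2 : g i' ⟨⟨j', Ne.symm hij'⟩, r'⟩ ∈ P i' := hUP _ (hgmem i' _)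
      rw [hp] at e1
      rw [hp'] at e2
      have h1 : i = i' := hclass e1 e2
      subst h1
      have h2 := hginj i (hp.trans hp'.symm)
      rw [Prod.ext_iff] at h2
      obtain ⟨h3, h4⟩ := h2
      rw [Subtype.ext_iff] at h3
      simp only at h3 h4
      exact hne ⟨h3, h4⟩
    -- neighbourhoods of the tuples
    set N : Fin k → Fin (k+1) → Finset α := fun j r =>
      Finset.univ.filter (fun v => insert v (S j r) ∈ E) with hNdef
    have hNdeg : ∀ j r, (1 - β) * n / k < ((N j r).card : ℝ) := by
      intro j r
      exact hdeg (S j r) (hScard j r) (hSlegal j r)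
    have hNE : ∀ {j r x}, x ∈ N j r → insert x (S j r) ∈ E := by
      intro j r x hx
      exact (Finset.mem_filter.1 hx).2
    have hNP : ∀ {j r x}, x ∈ N j r → x ∈ P j := by
      intro j r x hx
      obtain ⟨i, hi⟩ := hcover x
      by_cases hij : i = j
      · exact hij ▸ hi
      · exfalso
        have h1 := hE _ (hNE hx) j
        have h2 : insert x (S j r) ∩ P j = ∅ := by
          rw [Finset.insert_inter_of_notMem, hSPj]
          intro hxj
          exact hij (hclass hi hxj)
        rw [h2] at h1
        simp at h1
    have hNcov : ∀ {j r x}, x ∈ N j r → x ∈ V := by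
      intro j r x hx
      by_contra hxV
      refine exch ∅ (Finset.empty_subset M) {insert x (S j r)} ?_ ?_ ?_ ?_ ?_
      · intro gg hg
        rw [Finset.mem_singleton] at hg
        exact hg ▸ hNE hx
      · intro gg hg
        rw [Finset.mem_singleton] at hg
        exact hg ▸ Finset.insert_nonempty _ _
      · intro gg hg gg' hg' hne
        rw [Finset.mem_singleton] at hg hg'
        exact absurd (hg.trans hg'.symm) hne
      · intro gg hg e he _
        rw [Finset.mem_singleton] at hg
        subst hg
        rw [Finset.disjoint_left]
        intro y hy hye
        have hyV : y ∈ V := hVmem.2 ⟨e, he, hye⟩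
        rcases Finset.mem_insert.1 hy with h | h
        · exact hxV (h ▸ hyV)
        · exact hSuncov j r y h hyV
      · simp
    -- choosing the class-j vertex of each edge
    have hnonempty : Nonempty α := by
      have h1 : 0 < (P ⟨0, by omega⟩).card := by rw [hPcard]; omega
      obtain ⟨x, hx⟩ := Finset.card_pos.1 h1
      exact ⟨x⟩
    have hxe_ex : ∀ (e : Finset α) (j : Fin k), ∃ a : α, e ∈ E → e ∩ P j = {a} := by
      intro e j
      by_cases he : e ∈ E
      · obtain ⟨a, ha⟩ := Finset.card_eq_one.1 (hE e he j)
        exact ⟨a, fun _ => ha⟩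
      · exact ⟨Classical.arbitrary α, fun h => absurd h he⟩
    choose xe hxe using hxe_ex
    have hxe_mem : ∀ {e}, e ∈ E → ∀ j, xe e j ∈ e ∧ xe e j ∈ P j := by
      intro e he j
      have h1 := hxe e j he
      have h2 : xe e j ∈ e ∩ P j := by rw [h1]; exact Finset.mem_singleton_self _
      exact ⟨(Finset.mem_inter.1 h2).1, (Finset.mem_inter.1 h2).2⟩
    have hxe_eq : ∀ {e}, e ∈ E → ∀ {j y}, y ∈ e → y ∈ P j → y = xe e j := by
      intro e he j y hy hyP
      have h1 : y ∈ e ∩ P j := Finset.mem_inter.2 ⟨hy, hyP⟩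
      rw [hxe e j he] at h1
      exact Finset.mem_singleton.1 h1
    -- membership counts
    set c : Fin k → Finset α → ℕ := fun j e =>
      (Finset.univ.filter (fun r : Fin (k+1) => xe e j ∈ N j r)).card with hcdef
    -- claim B : an edge of M cannot be hit in two different classes
    have claimB : ∀ e ∈ M, ∀ {j j' : Fin k}, j ≠ j' → ∀ {r r'},
        xe e j ∈ N j r → xe e j' ∈ N j' r' → False := by
      intro e he j j' hjj r r' hj hj'
      have heE : e ∈ E := hME he
      have hxeV : ∀ jj, xe e jj ∈ V := fun jj => hVmem.2 ⟨e, he, (hxe_mem heE jj).1⟩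
      set E1 := insert (xe e j) (S j r) with hE1d
      set E2 := insert (xe e j') (S j' r') with hE2d
      have hd12 : Disjoint E1 E2 := by
        rw [Finset.disjoint_left]
        intro y hy hy'
        rcases Finset.mem_insert.1 hy with h | h
        · subst h
          rcases Finset.mem_insert.1 hy' with h' | h'
          · have h2 := (hxe_mem heE j').2
            rw [← h'] at h2
            exact hjj (hclass (hxe_mem heE j).2 h2)
          · exact hSuncov j' r' _ h' (hxeV j)
        · rcases Finset.mem_insert.1 hy' with h' | h'
          · rw [h'] at h
            exact hSuncov j r _ h (hxeV j')
          · exact (Finset.disjoint_left.1 (hSdisj (fun hh => hjj hh.1)) h) h'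
      have hne12 : E1 ≠ E2 := by
        intro h
        have h2 : E1 = ∅ := disjoint_self.1 (by rw [h] at hd12 ⊢; exact hd12)
        simp [hE1d] at h2
      refine exch {e} (Finset.singleton_subset_iff.2 he) {E1, E2} ?_ ?_ ?_ ?_ ?_
      · intro gg hg
        rcases Finset.mem_insert.1 hg with h | h
        · exact h ▸ hNE hj
        · rw [Finset.mem_singleton] at h
          exact h ▸ hNE hj'
      · intro gg hg
        rcases Finset.mem_insert.1 hg with h | h
        · exact h ▸ Finset.insert_nonempty _ _
        · rw [Finset.mem_singleton] at h
          exact h ▸ Finset.insert_nonempty _ _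
      · intro gg hg gg' hg' hne
        have hcases : ∀ {x : Finset α}, x ∈ ({E1, E2} : Finset (Finset α)) → x = E1 ∨ x = E2 := by
          intro x hx
          rcases Finset.mem_insert.1 hx with h | h
          · exact Or.inl h
          · exact Or.inr (Finset.mem_singleton.1 h)
        rcases hcases hg with h | h <;> rcases hcases hg' with h' | h' <;> subst h <;> subst h'
        · exact absurd rfl hne
        · exact hd12
        · exact hd12.symm
        · exact absurd rfl hne
      · intro gg hg e'' he'' hne''
        have hne2 : e'' ≠ e := by
          intro h
          exact hne'' (by rw [h]; exact Finset.mem_singleton_self e)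
        have hde : Disjoint e e'' := hMpd e he e'' he'' (Ne.symm hne2)
        have hkey : ∀ (jj : Fin k) (rr : Fin (k+1)), Disjoint (insert (xe e jj) (S jj rr)) e'' := by
          intro jj rr
          rw [Finset.disjoint_left]
          intro y hy hye
          rcases Finset.mem_insert.1 hy with h | h
          · subst h
            exact (Finset.disjoint_left.1 hde (hxe_mem heE jj).1) hye
          · exact hSuncov jj rr _ h (hVmem.2 ⟨e'', he'', hye⟩)
        rcases Finset.mem_insert.1 hg with h | h
        · exact h ▸ hkey j r
        · rw [Finset.mem_singleton] at h
          exact h ▸ hkey j' r'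
      · rw [Finset.card_singleton, Finset.card_insert_of_notMem (by simp [hne12]),
          Finset.card_singleton]
        omega
    -- |N j r| counted through the matching
    have hNM : ∀ j r, (M.filter (fun e => xe e j ∈ N j r)).card = (N j r).card := by
      intro j r
      refine Finset.card_bij (fun e _ => xe e j) ?_ ?_ ?_
      · intro e he
        exact (Finset.mem_filter.1 he).2
      · intro e1 h1 e2 h2 heq
        by_contra hne
        have hd := hMpd e1 (Finset.mem_filter.1 h1).1 e2 (Finset.mem_filter.1 h2).1 hne
        have hm1 := (hxe_mem (hME (Finset.mem_filter.1 h1).1) j).1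
        have hm2 := (hxe_mem (hME (Finset.mem_filter.1 h2).1) j).1
        rw [heq] at hm1
        exact (Finset.disjoint_left.1 hd hm1) hm2
      · intro x hx
        obtain ⟨e, he, hxein⟩ := hVmem.1 (hNcov hx)
        have hxP : x ∈ P j := hNP hx
        have h1 : x = xe e j := hxe_eq (hME he) hxein hxP
        refine ⟨e, Finset.mem_filter.2 ⟨he, ?_⟩, h1.symm⟩
        rw [← h1]; exact hx
    have hsum1 : ∀ j, ∑ r : Fin (k+1), (N j r).card = ∑ e ∈ M, c j e := by
      intro j
      have h1 : ∀ r : Fin (k+1), (N j r).card = ∑ e ∈ M, if xe e j ∈ N j r then 1 else 0 := by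
        intro r
        rw [← hNM j r, Finset.card_filter]
      rw [Finset.sum_congr rfl (fun r _ => h1 r), Finset.sum_comm]
      exact Finset.sum_congr rfl (fun e _ => (Finset.card_filter _ _).symm)
    have hcle : ∀ j e, c j e ≤ k + 1 := by
      intro j e
      calc c j e ≤ (Finset.univ : Finset (Fin (k+1))).card := Finset.card_filter_le _ _
        _ = k + 1 := by simp
    set touched : Fin k → Finset (Finset α) := fun j => M.filter (fun e => 0 < c j e) with htodef
    set rich : Fin k → Finset (Finset α) := fun j => M.filter (fun e => k ≤ c j e) with hrichdef
    have hrich_sub : ∀ j, rich j ⊆ touched j := by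
      intro j e he
      rw [hrichdef, Finset.mem_filter] at he
      rw [htodef, Finset.mem_filter]
      exact ⟨he.1, by omega⟩
    have hc_ex : ∀ {j e}, 0 < c j e → ∃ r, xe e j ∈ N j r := by
      intro j e hc
      rw [hcdef] at hc
      obtain ⟨r, hr⟩ := Finset.card_pos.1 hc
      exact ⟨r, (Finset.mem_filter.1 hr).2⟩
    have htouched_disj : ∀ {j j' : Fin k}, j ≠ j' → Disjoint (touched j) (touched j') := by
      intro j j' hne
      rw [Finset.disjoint_left]
      intro e he he'
      rw [htodef, Finset.mem_filter] at he he'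
      obtain ⟨r, hr⟩ := hc_ex he.2
      obtain ⟨r', hr'⟩ := hc_ex he'.2
      exact claimB e he.1 hne hr hr'
    have htouched_subM : ∀ j, touched j ⊆ M := fun j => Finset.filter_subset _ _
    have hT_sum : ∑ j, (touched j).card ≤ M.card := by
      rw [← Finset.card_biUnion (fun j _ j' _ hne => htouched_disj hne)]
      apply Finset.card_le_card
      intro e he
      obtain ⟨j, _, hj⟩ := Finset.mem_biUnion.1 he
      exact htouched_subM j hj
    have hrich_disj : ∀ (j j' : Fin k), j ≠ j' → Disjoint (rich j) (rich j') := fun j j' hne =>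
      Finset.disjoint_of_subset_left (hrich_sub j)
        (Finset.disjoint_of_subset_right (hrich_sub j') (htouched_disj hne))
    set Rset := Finset.univ.biUnion rich with hRsetdef
    have hRset_card : Rset.card = ∑ j, (rich j).card :=
      Finset.card_biUnion (fun j _ j' _ hne => hrich_disj j j' hne)
    have hRsetM : Rset ⊆ M := by
      intro e he
      obtain ⟨j, _, hj⟩ := Finset.mem_biUnion.1 he
      exact (Finset.mem_filter.1 hj).1
    set bad := M \ Rset with hbaddef
    have hbad_card : bad.card + ∑ j, (rich j).card = M.card := by
      rw [hbaddef, Finset.card_sdiff_of_subset hRsetM, ← hRset_card]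
      have := Finset.card_le_card hRsetM
      omega
    -- the cover
    set C : Fin k → Finset α := fun j =>
      (U j ∪ (touched j).image (fun e => xe e j)) ∪ bad.biUnion (fun e => e ∩ P j) with hCdef
    have hC_card : ∀ j, (C j).card ≤ (n - M.card) + (touched j).card + bad.card := by
      intro j
      have h1 : (bad.biUnion (fun e => e ∩ P j)).card ≤ bad.card := by
        refine le_trans (Finset.card_biUnion_le) ?_
        have h2 : ∀ e ∈ bad, (e ∩ P j).card = 1 := by
          intro e he
          exact hE e (hME (Finset.mem_sdiff.1 he).1) j
        rw [Finset.sum_congr rfl h2]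
        simp
      calc (C j).card ≤ (U j ∪ (touched j).image (fun e => xe e j)).card
            + (bad.biUnion (fun e => e ∩ P j)).card := Finset.card_union_le _ _
        _ ≤ ((U j).card + ((touched j).image (fun e => xe e j)).card)
            + (bad.biUnion (fun e => e ∩ P j)).card :=
              Nat.add_le_add_right (Finset.card_union_le _ _) _
        _ ≤ ((n - M.card) + (touched j).card) + bad.card := by
            refine add_le_add (add_le_add ?_ ?_) h1
            · rw [hUcard j]
            · exact Finset.card_image_le
    have hC_P : ∀ j, C j ⊆ P j := by
      intro j x hx
      rcases Finset.mem_union.1 hx with h | h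
      · rcases Finset.mem_union.1 h with h' | h'
        · exact hUP j h'
        · obtain ⟨e, he, hxeq⟩ := Finset.mem_image.1 h'
          rw [← hxeq]
          exact (hxe_mem (hME (htouched_subM j he)) j).2
      · obtain ⟨e, _, hj⟩ := Finset.mem_biUnion.1 h
        exact (Finset.mem_inter.1 hj).2
    set W := Finset.univ.filter (fun x : α => ∀ j, x ∉ C j) with hWdef
    have hUC : ∀ j, U j ⊆ C j := fun j =>
      le_trans Finset.subset_union_left Finset.subset_union_left
    have hWmem : ∀ {x}, x ∈ W ↔ ∀ j, x ∉ C j := by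
      intro x
      rw [hWdef, Finset.mem_filter]
      simp
    have hWcard : ∀ i, (P i).card ≤ (W ∩ P i).card + (C i).card := by
      intro i
      refine le_trans Finset.card_le_card_sdiff_add_card (Nat.add_le_add_right ?_ _)
      apply Finset.card_le_card
      intro x hx
      rw [Finset.mem_sdiff] at hx
      refine Finset.mem_inter.2 ⟨hWmem.2 ?_, hx.1⟩
      intro j hxj
      by_cases hij : j = i
      · exact hx.2 (hij ▸ hxj)
      · exact hij (hclass (hC_P j hxj) hx.1)
    -- partition count of any set
    have hcardPart : ∀ s : Finset α, s.card = ∑ i, (s ∩ P i).card := by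
      intro s
      have h1 : ∀ i, (s ∩ P i).card = ∑ x ∈ s, if x ∈ P i then 1 else 0 := by
        intro i
        rw [← Finset.filter_mem_eq_inter, Finset.card_filter]
      have h2 : ∀ x : α, (∑ i, if x ∈ P i then 1 else 0) = 1 := by
        intro x
        obtain ⟨i0, hi0, hu⟩ := hP x
        rw [Finset.sum_eq_single i0]
        · rw [if_pos hi0]
        · intro b _ hb
          rw [if_neg (fun hxb => hb (hu b hxb))]
        · intro h
          exact absurd (Finset.mem_univ i0) h
      calc s.card = ∑ x ∈ s, 1 := by simp
        _ = ∑ x ∈ s, ∑ i, (if x ∈ P i then 1 else 0) :=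
            Finset.sum_congr rfl (fun x _ => (h2 x).symm)
        _ = ∑ i, ∑ x ∈ s, (if x ∈ P i then 1 else 0) := Finset.sum_comm
        _ = ∑ i, (s ∩ P i).card := Finset.sum_congr rfl (fun i _ => (h1 i).symm)
    by_cases hfex : ∃ f ∈ E, f ⊆ W
    · -- Case II : an edge inside W gives an augmenting configuration
      obtain ⟨f, hfE, hfW⟩ := hfex
      have hfP : ∀ jj, f ∩ P jj = {xe f jj} := fun jj => hxe f jj hfE
      have hxfW : ∀ jj, xe f jj ∈ W := fun jj => hfW (hxe_mem hfE jj).1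
      have hfcov : ∀ x ∈ f, x ∈ V := by
        intro x hx
        obtain ⟨i, hi⟩ := hcover x
        have h1 : x = xe f i := hxe_eq hfE hx hi
        have h2 : x ∉ C i := by rw [h1]; exact hWmem.1 (hxfW i) i
        by_contra hxV
        exact h2 (hUC i (Finset.mem_sdiff.2 ⟨hi, hxV⟩))
      set rem := M.filter (fun e => ¬ Disjoint e f) with hremdef
      have hremM : rem ⊆ M := Finset.filter_subset _ _
      have hfk : f.card = k := by
        rw [hcardPart f, Finset.sum_congr rfl (fun i _ => by rw [hfP i, Finset.card_singleton])]
        simp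
      have hrem_card : rem.card ≤ k := by
        have hsel : ∀ e : Finset α, ∃ y, e ∈ rem → y ∈ e ∧ y ∈ f := by
          intro e
          by_cases he : e ∈ rem
          · obtain ⟨y, hy1, hy2⟩ := Finset.not_disjoint_iff.1 (Finset.mem_filter.1 he).2
            exact ⟨y, fun _ => ⟨hy1, hy2⟩⟩
          · exact ⟨Classical.arbitrary α, fun h => absurd h he⟩
        choose sel hsel2 using hsel
        rw [← hfk]
        refine Finset.card_le_card_of_injOn sel
          (fun e he => (hsel2 e he).2) ?_
        intro e1 h1 e2 h2 heq
        by_contra hne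
        have hd := hMpd e1 (hremM h1) e2 (hremM h2) hne
        exact (Finset.disjoint_left.1 hd (hsel2 e1 h1).1) (heq ▸ (hsel2 e2 h2).1)
      have hrich_of_rem : ∀ e ∈ rem, ∃ jj, e ∈ rich jj := by
        intro e he
        have heM := hremM he
        obtain ⟨y, hy1, hy2⟩ := Finset.not_disjoint_iff.1 (Finset.mem_filter.1 he).2
        obtain ⟨i, hi⟩ := hcover y
        have h1 : y = xe f i := hxe_eq hfE hy2 hi
        have hnb : e ∉ bad := by
          intro hb
          have h2 : y ∈ C i := Finset.mem_union.2
            (Or.inr (Finset.mem_biUnion.2 ⟨e, hb, Finset.mem_inter.2 ⟨hy1, hi⟩⟩))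
          rw [h1] at h2
          exact (hWmem.1 (hxfW i) i) h2
        have h3 : e ∈ Rset := by
          by_contra h4
          exact hnb (Finset.mem_sdiff.2 ⟨heM, h4⟩)
        obtain ⟨jj, _, hjj⟩ := Finset.mem_biUnion.1 h3
        exact ⟨jj, hjj⟩
      have hphi : ∀ e : Finset α, ∃ jj, e ∈ rem → e ∈ rich jj := by
        intro e
        by_cases he : e ∈ rem
        · obtain ⟨jj, hjj⟩ := hrich_of_rem e he
          exact ⟨jj, fun _ => hjj⟩
        · exact ⟨⟨0, by omega⟩, fun h => absurd h he⟩
      choose φ hφ using hphi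
      set O : Finset α → Finset (Fin (k+1)) :=
        fun e => Finset.univ.filter (fun r => xe e (φ e) ∈ N (φ e) r) with hOdef
      have hO_card : ∀ e ∈ rem, k ≤ (O e).card := by
        intro e he
        have h0 := (Finset.mem_filter.1 (hφ e he)).2
        exact h0
      set t : {e // e ∈ rem} → Finset (Fin k × Fin (k+1)) := fun e => {φ e.1} ×ˢ O e.1 with htdef
      have ht_card : ∀ e : {e // e ∈ rem}, k ≤ (t e).card := by
        intro e
        rw [htdef]
        simp only [Finset.card_product, Finset.card_singleton, one_mul]
        exact hO_card e.1 e.2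
      have hhall : ∀ s : Finset {e // e ∈ rem}, s.card ≤ (s.biUnion t).card := by
        intro s
        rcases s.eq_empty_or_nonempty with h | ⟨e0, he0⟩
        · simp [h]
        · calc s.card ≤ Fintype.card {e // e ∈ rem} := by
                rw [← Finset.card_univ]; exact Finset.card_le_univ s
            _ = rem.card := Fintype.card_coe rem
            _ ≤ k := hrem_card
            _ ≤ (t e0).card := ht_card e0
            _ ≤ (s.biUnion t).card :=
                Finset.card_le_card (Finset.subset_biUnion_of_mem t he0)
      obtain ⟨ρ, hρinj, hρmem⟩ := (Finset.all_card_le_biUnion_card_iff_exists_injective t).1 hhall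
      have hρ1 : ∀ e : {e // e ∈ rem}, (ρ e).1 = φ e.1 ∧ xe e.1 (φ e.1) ∈ N (φ e.1) (ρ e).2 := by
        intro e
        have h0 := hρmem e
        rw [htdef, Finset.mem_product, Finset.mem_singleton] at h0
        refine ⟨h0.1, ?_⟩
        have h1 := h0.2
        rw [hOdef, Finset.mem_filter] at h1
        exact h1.2
      set comp : {e // e ∈ rem} → Finset α :=
        fun e => insert (xe e.1 (φ e.1)) (S (φ e.1) (ρ e).2) with hcompdef
      have hcompE : ∀ e, comp e ∈ E := fun e => hNE (hρ1 e).2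
      have hxφe : ∀ e : {e // e ∈ rem}, xe e.1 (φ e.1) ∈ e.1 :=
        fun e => (hxe_mem (hME (hremM e.2)) (φ e.1)).1
      have hxφf : ∀ e : {e // e ∈ rem}, xe e.1 (φ e.1) ∉ f := by
        intro e hxf
        have h1 : e.1 ∈ touched (φ e.1) := hrich_sub _ (hφ e.1 e.2)
        have h2 : xe e.1 (φ e.1) ∈ C (φ e.1) :=
          Finset.mem_union.2 (Or.inl (Finset.mem_union.2
            (Or.inr (Finset.mem_image.2 ⟨e.1, h1, rfl⟩))))
        exact hWmem.1 (hfW hxf) (φ e.1) h2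
      have hcomp_disj_f : ∀ e, Disjoint (comp e) f := by
        intro e
        rw [Finset.disjoint_left]
        intro y hy hyf
        rcases Finset.mem_insert.1 hy with h | h
        · exact hxφf e (h ▸ hyf)
        · exact hSuncov _ _ _ h (hfcov y hyf)
      have hcomp_disj_M : ∀ e, ∀ e'' ∈ M, e'' ∉ rem → Disjoint (comp e) e'' := by
        intro e e'' he'' hne
        rw [Finset.disjoint_left]
        intro y hy hye
        have hne2 : e.1 ≠ e'' := by
          rintro rfl
          exact hne e.2
        rcases Finset.mem_insert.1 hy with h | h
        · subst h
          exact (Finset.disjoint_left.1 (hMpd _ (hremM e.2) _ he'' hne2) (hxφe e)) hye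
        · exact hSuncov _ _ _ h (hVmem.2 ⟨e'', he'', hye⟩)
      have hcomp_pd : ∀ e e' : {e // e ∈ rem}, e ≠ e' → Disjoint (comp e) (comp e') := by
        intro e e' hne
        have hne1 : e.1 ≠ e'.1 := fun h => hne (Subtype.ext h)
        have hdee : Disjoint e.1 e'.1 := hMpd _ (hremM e.2) _ (hremM e'.2) hne1
        have hρne : ¬(φ e.1 = φ e'.1 ∧ (ρ e).2 = (ρ e').2) := by
          rintro ⟨h1, h2⟩
          apply hne
          apply hρinj
          refine Prod.ext ?_ h2
          rw [(hρ1 e).1, (hρ1 e').1]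
          exact h1
        rw [Finset.disjoint_left]
        intro y hy hy'
        rcases Finset.mem_insert.1 hy with h | h <;> rcases Finset.mem_insert.1 hy' with h' | h'
        · have hye2 : y ∈ e.1 := by rw [h]; exact hxφe e
          have hye3 : y ∈ e'.1 := by rw [h']; exact hxφe e'
          exact (Finset.disjoint_left.1 hdee hye2) hye3
        · refine hSuncov _ _ y h' (hVmem.2 ⟨e.1, hremM e.2, ?_⟩)
          rw [h]; exact hxφe e
        · refine hSuncov _ _ y h (hVmem.2 ⟨e'.1, hremM e'.2, ?_⟩)
          rw [h']; exact hxφe e'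
        · exact (Finset.disjoint_left.1 (hSdisj hρne) h) h'
      have hcomp_inj : Function.Injective comp := by
        intro e e' heq
        by_contra hne
        have hd := hcomp_pd e e' hne
        rw [heq] at hd
        have h0 : comp e' = ∅ := disjoint_self.1 hd
        simp [hcompdef] at h0
      have hfne : f.Nonempty := by
        rw [← Finset.card_pos, hfk]; omega
      have hfnotin : f ∉ Finset.univ.image comp := by
        intro h
        obtain ⟨e, _, he⟩ := Finset.mem_image.1 h
        have hd := hcomp_disj_f e
        rw [he] at hd
        obtain ⟨y, hy⟩ := hfne
        exact (Finset.disjoint_left.1 hd hy) hy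
      refine exch rem hremM (insert f (Finset.univ.image comp)) ?_ ?_ ?_ ?_ ?_
      · intro gg hg
        rcases Finset.mem_insert.1 hg with h | h
        · exact h ▸ hfE
        · obtain ⟨e, _, he⟩ := Finset.mem_image.1 h
          exact he ▸ hcompE e
      · intro gg hg
        rcases Finset.mem_insert.1 hg with h | h
        · exact h ▸ hfne
        · obtain ⟨e, _, he⟩ := Finset.mem_image.1 h
          exact he ▸ Finset.insert_nonempty _ _
      · intro gg hg gg' hg' hne
        rcases Finset.mem_insert.1 hg with h | h <;> rcases Finset.mem_insert.1 hg' with h' | h'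
        · exact absurd (h.trans h'.symm) hne
        · subst h
          obtain ⟨e, _, he⟩ := Finset.mem_image.1 h'
          exact he ▸ (hcomp_disj_f e).symm
        · subst h'
          obtain ⟨e, _, he⟩ := Finset.mem_image.1 h
          exact he ▸ hcomp_disj_f e
        · obtain ⟨e, _, heq⟩ := Finset.mem_image.1 h
          obtain ⟨e', _, heq'⟩ := Finset.mem_image.1 h'
          subst heq
          subst heq'
          refine hcomp_pd e e' ?_
          rintro rfl
          exact hne rfl
      · intro gg hg e'' he'' hnr
        rcases Finset.mem_insert.1 hg with h | h
        · subst h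
          have h0 : ¬¬ Disjoint e'' gg := by
            intro hnd
            exact hnr (Finset.mem_filter.2 ⟨he'', hnd⟩)
          exact (not_not.1 h0).symm
        · obtain ⟨e, _, he⟩ := Finset.mem_image.1 h
          exact he ▸ hcomp_disj_M e e'' he'' hnr
      · rw [Finset.card_insert_of_notMem hfnotin,
          Finset.card_image_of_injective _ hcomp_inj, Finset.card_univ, Fintype.card_coe]
        omega
    · -- Case I : W is a large independent set, contradicting hnotext
      apply hnotext
      refine ⟨W, ?_, ?_⟩
      · intro e he hsub
        exact hfex ⟨e, he, hsub⟩
      · intro i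
        have hK0 : (0:ℝ) < (k:ℝ) := by exact_mod_cast (by omega : 0 < k)
        have hK2 : (2:ℝ) ≤ (k:ℝ) := by exact_mod_cast hk2
        set γ : ℝ := (n:ℝ) / (k:ℝ) with hγdef
        have hγ0 : (0:ℝ) ≤ γ := div_nonneg (Nat.cast_nonneg n) hK0.le
        have hNg : (n:ℝ) = (k:ℝ) * γ := by
          rw [hγdef]
          field_simp
        have hrwdeg : ∀ j r, (1 - β) * γ < ((N j r).card : ℝ) := by
          intro j r
          have h0 := hNdeg j r
          have h1 : (1 - β) * (n:ℝ) / (k:ℝ) = (1 - β) * γ := by rw [hγdef]; ring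
          rwa [h1] at h0
        have hA : ∀ j, ((k:ℝ)+1) * ((1-β)*γ) < ((∑ r : Fin (k+1), (N j r).card : ℕ) : ℝ) := by
          intro j
          have h2 : ∑ _r : Fin (k+1), ((1-β)*γ) < ∑ r : Fin (k+1), ((N j r).card : ℝ) :=
            Finset.sum_lt_sum_of_nonempty Finset.univ_nonempty (fun r _ => hrwdeg j r)
          rw [Finset.sum_const, Finset.card_univ, Fintype.card_fin, nsmul_eq_mul] at h2
          have h3 : ((∑ r : Fin (k+1), (N j r).card : ℕ) : ℝ)
              = ∑ r : Fin (k+1), ((N j r).card : ℝ) := by push_cast; rfl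
          rw [h3]
          calc ((k:ℝ)+1)*((1-β)*γ) = ((k+1 : ℕ):ℝ)*((1-β)*γ) := by push_cast; ring
            _ < _ := h2
        have hMsum : ∀ j, ∑ e ∈ M, c j e = ∑ e ∈ touched j, c j e := by
          intro j
          symm
          apply Finset.sum_subset (htouched_subM j)
          intro e heM het
          have h4 : ¬ 0 < c j e := fun h => het (Finset.mem_filter.2 ⟨heM, h⟩)
          omega
        have hTlow : ∀ j, (1 - β) * γ < ((touched j).card : ℝ) := by
          intro j
          have hBn : (∑ r : Fin (k+1), (N j r).card) ≤ (touched j).card * (k+1) := by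
            rw [hsum1 j, hMsum j]
            calc ∑ e ∈ touched j, c j e ≤ (touched j).card • (k+1) :=
                Finset.sum_le_card_nsmul _ _ _ (fun e _ => hcle j e)
              _ = (touched j).card * (k+1) := by rw [smul_eq_mul]
          have hB : ((∑ r : Fin (k+1), (N j r).card : ℕ) : ℝ)
              ≤ ((touched j).card : ℝ) * ((k:ℝ)+1) := by exact_mod_cast hBn
          have h5 : ((1-β)*γ) * ((k:ℝ)+1) < ((touched j).card : ℝ) * ((k:ℝ)+1) := by
            have := lt_of_lt_of_le (hA j) hB
            linarith
          have h6 : (0:ℝ) < (k:ℝ)+1 := by linarith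
          exact lt_of_mul_lt_mul_right h5 h6.le
        have hF4 : ∀ j, ((k:ℝ)+1) * ((1-β)*γ) <
            (((touched j).card:ℝ) - ((rich j).card:ℝ))*((k:ℝ)-1)
              + ((rich j).card:ℝ)*((k:ℝ)+1) := by
          intro j
          have hTR : (rich j).card ≤ (touched j).card := Finset.card_le_card (hrich_sub j)
          have h9 : (∑ e ∈ M, c j e)
              ≤ ((touched j).card - (rich j).card) * (k-1) + (rich j).card * (k+1) := by
            rw [hMsum j, ← Finset.sum_sdiff (hrich_sub j)]
            have hr1 : ∑ e ∈ rich j, c j e ≤ (rich j).card * (k+1) := by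
              calc ∑ e ∈ rich j, c j e ≤ (rich j).card • (k+1) :=
                  Finset.sum_le_card_nsmul _ _ _ (fun e _ => hcle j e)
                _ = (rich j).card * (k+1) := by rw [smul_eq_mul]
            have hr2 : ∑ e ∈ touched j \ rich j, c j e
                ≤ ((touched j).card - (rich j).card) * (k-1) := by
              have hcb : ∀ e ∈ touched j \ rich j, c j e ≤ k - 1 := by
                intro e he
                have h10 : e ∉ rich j := (Finset.mem_sdiff.1 he).2
                have h11 : e ∈ M := htouched_subM j (Finset.mem_sdiff.1 he).1
                have h12 : ¬ k ≤ c j e := fun h =>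
                  h10 (Finset.mem_filter.2 ⟨h11, h⟩)
                omega
              calc ∑ e ∈ touched j \ rich j, c j e
                  ≤ (touched j \ rich j).card • (k-1) :=
                    Finset.sum_le_card_nsmul _ _ _ hcb
                _ = ((touched j).card - (rich j).card) * (k-1) := by
                    rw [Finset.card_sdiff_of_subset (hrich_sub j), smul_eq_mul]
            omega
          have h10 := (Nat.cast_le (α := ℝ)).2 h9
          push_cast [Nat.cast_sub hTR, Nat.cast_sub hk] at h10
          have h11 : ((∑ e ∈ M, c j e : ℕ) : ℝ) = ∑ e ∈ M, ((c j e : ℕ):ℝ) := by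
            push_cast; rfl
          calc ((k:ℝ)+1) * ((1-β)*γ) < ((∑ e ∈ M, c j e : ℕ) : ℝ) := by
                rw [← hsum1 j]; exact hA j
            _ = ∑ e ∈ M, ((c j e : ℕ):ℝ) := h11
            _ ≤ _ := h10
        haveI : Nonempty (Fin k) := ⟨⟨0, by omega⟩⟩
        have hsumF4 : (k:ℝ) * (((k:ℝ)+1) * ((1-β)*γ)) <
            ∑ j, ((((touched j).card:ℝ) - ((rich j).card:ℝ))*((k:ℝ)-1)
              + ((rich j).card:ℝ)*((k:ℝ)+1)) := by
          have h2 := Finset.sum_lt_sum_of_nonempty (Finset.univ_nonempty (α := Fin k))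
            (fun j _ => hF4 j)
          rw [Finset.sum_const, Finset.card_univ, Fintype.card_fin, nsmul_eq_mul] at h2
          exact h2
        have hexp : ∑ j, ((((touched j).card:ℝ) - ((rich j).card:ℝ))*((k:ℝ)-1)
              + ((rich j).card:ℝ)*((k:ℝ)+1))
            = ((∑ j, ((touched j).card:ℝ)) - (∑ j, ((rich j).card:ℝ)))*((k:ℝ)-1)
              + (∑ j, ((rich j).card:ℝ))*((k:ℝ)+1) := by
          rw [Finset.sum_add_distrib, ← Finset.sum_mul, ← Finset.sum_mul,
            Finset.sum_sub_distrib]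
        have hTsumR : (∑ j, ((touched j).card:ℝ)) ≤ (M.card:ℝ) := by
          exact_mod_cast hT_sum
        have hRB : (bad.card : ℝ) + (∑ j, ((rich j).card:ℝ)) = (M.card:ℝ) := by
          exact_mod_cast hbad_card
        have hmn : (M.card : ℝ) ≤ (k:ℝ)*γ := by
          have h0 : (M.card:ℝ) ≤ (n:ℝ) := by exact_mod_cast (by omega : M.card ≤ n)
          rw [hNg] at h0
          exact h0
        have hBD : 2*(bad.card:ℝ) ≤ ((k:ℝ)+1)*(k:ℝ)*β*γ := by
          have h1 : (k:ℝ) * (((k:ℝ)+1) * ((1-β)*γ)) <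
              ((∑ j, ((touched j).card:ℝ)) - (∑ j, ((rich j).card:ℝ)))*((k:ℝ)-1)
                + (∑ j, ((rich j).card:ℝ))*((k:ℝ)+1) := by
            rw [← hexp]; exact hsumF4
          have h2 : ((∑ j, ((touched j).card:ℝ)) - (∑ j, ((rich j).card:ℝ)))*((k:ℝ)-1)
              ≤ ((M.card:ℝ) - (∑ j, ((rich j).card:ℝ)))*((k:ℝ)-1) :=
            mul_le_mul_of_nonneg_right (by linarith) (by linarith)
          have h3 : ((k:ℝ)+1)*(M.card:ℝ) ≤ ((k:ℝ)+1)*((k:ℝ)*γ) :=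
            mul_le_mul_of_nonneg_left hmn (by linarith)
          nlinarith [h1, h2, h3, hRB]
        have hTi : ((touched i).card : ℝ) ≤ (M.card:ℝ) - ((k:ℝ)-1)*((1-β)*γ) := by
          have h1 : ∑ j ∈ Finset.univ.erase i, ((touched j).card:ℝ) + ((touched i).card:ℝ)
              = ∑ j, ((touched j).card:ℝ) :=
            Finset.sum_erase_add _ _ (Finset.mem_univ i)
          have h2 : (Finset.univ.erase i).card • ((1-β)*γ)
              ≤ ∑ j ∈ Finset.univ.erase i, ((touched j).card:ℝ) :=
            Finset.card_nsmul_le_sum _ _ _ (fun j _ => (hTlow j).le)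
          have h3 : (Finset.univ.erase i).card = k - 1 := by
            rw [Finset.card_erase_of_mem (Finset.mem_univ i), Finset.card_univ,
              Fintype.card_fin]
          rw [h3, nsmul_eq_mul, Nat.cast_sub hk, Nat.cast_one] at h2
          linarith [hTsumR, h1, h2]
        have hCi : ((C i).card : ℝ) ≤ ((k:ℝ)*γ - (M.card:ℝ)) + ((touched i).card:ℝ)
            + (bad.card:ℝ) := by
          have h0 := hC_card i
          have h2 := (Nat.cast_le (α := ℝ)).2 h0
          push_cast [Nat.cast_sub (by omega : M.card ≤ n)] at h2
          rw [hNg] at h2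
          linarith [h2]
        have hWi : (k:ℝ)*γ ≤ ((W ∩ P i).card : ℝ) + ((C i).card:ℝ) := by
          have h0 := hWcard i
          rw [hPcard i] at h0
          have h1 := (Nat.cast_le (α := ℝ)).2 h0
          push_cast at h1
          rw [hNg] at h1
          exact h1
        have hgoal : (1 - (k:ℝ)^2*β)*((k:ℝ)-1)*(n:ℝ)/(k:ℝ)
            = (1 - (k:ℝ)^2*β)*((k:ℝ)-1)*γ := by
          rw [hγdef]; ring
        rw [hgoal]
        have hbr : (0:ℝ) ≤ ((k:ℝ)-2)*((2*(k:ℝ)-1)*((k:ℝ)+1)) :=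
          mul_nonneg (by linarith) (mul_nonneg (by linarith) (by linarith))
        have hkey : ((k:ℝ)-1)*(1-β)*γ - ((k:ℝ)+1)*(k:ℝ)*β*γ/2
              - (1 - (k:ℝ)^2*β)*((k:ℝ)-1)*γ
            = β*γ*(((k:ℝ)-2)*((2*(k:ℝ)-1)*((k:ℝ)+1)))/2 := by ring
        have hprod : (0:ℝ) ≤ β*γ*(((k:ℝ)-2)*((2*(k:ℝ)-1)*((k:ℝ)+1))) :=
          mul_nonneg (mul_nonneg hβ0.le hγ0) hbr
        linarith [hTi, hBD, hCi, hWi, hkey, hprod]
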